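/- Let C > 0, J₁ > 0 be real constants, and define a sequence (J_j)_{j≥1} by J_j = c·I·[Σ_{l≥2} C^l Σ_{i₁+...+i_l=j} J_{i₁}···J_{i_l} + Σ_{m≥2} Σ_{j₁+...+j_m=j} C^m Π_{p=1}^m (Σ_{l≥1} C^l Σ_{i₁+...+i_l=j_p} J_{i₁}···J_{i_l})] for j ≥ 2 (with indices i_q, j_p ≥ 1 and appropriate positive constants c, I). Then the generating function J(z) = Σ_{j≥1} J_j z^j satisfies the algebraic equation a·J(z)³ - b(z)·J(z)² + c(z)·J(z) - z = 0 formally, where a = C(C+C²)(1/J₁ + C), b(z) = (2C+C²)/J₁ + C² + C⁴ + (C²+C³)z, c(z) = 1/J₁ + (2C+C²)z; consequently, if at z=0 the cubic a x³ - b(0)x² + c(0)x = 0 has three distinct roots, then J(z) has positive radius of convergence and there exist d ≥ 0, D > 0 with J_j ≤ d·D^j for all j. -/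

import Mathlib

/-- `compP J l j = Σ_{i₁+⋯+i_l = j, i_q ≥ 1} J_{i₁} ⋯ J_{i_l}`, the sum over compositions
of `j` into `l` positive parts of the product of the `J`'s. -/
noncomputable def compP (J : ℕ → ℝ) : ℕ → ℕ → ℝ
  | 0, j => if j = 0 then 1 else 0
  | l + 1, j => ∑ i ∈ Finset.Icc 1 j, J i * compP J l (j - i)

/-- `compK J C q = Σ_{l≥1} C^l Σ_{i₁+⋯+i_l=q} J_{i₁}⋯J_{i_l}` (the sum is finite since
compositions of `q` have at most `q` parts). -/
noncomputable def compK (J : ℕ → ℝ) (C : ℝ) (q : ℕ) : ℝ :=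
  ∑' l : ℕ, if 1 ≤ l then C ^ l * compP J l q else 0

/-- `compQ J C m j = Σ_{j₁+⋯+j_m=j, j_p ≥ 1} K_{j₁} ⋯ K_{j_m}` where `K = compK J C`. -/
noncomputable def compQ (J : ℕ → ℝ) (C : ℝ) : ℕ → ℕ → ℝ
  | 0, j => if j = 0 then 1 else 0
  | m + 1, j => ∑ i ∈ Finset.Icc 1 j, compK J C i * compQ J C m (j - i)

/-- Generating function argument of Proposition 5.6: if `J_j` satisfies the recursion
`J_j = J₁ [Σ_{l≥2} C^l Σ_{i₁+⋯+i_l=j} J_{i₁}⋯J_{i_l}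
        + Σ_{m≥2} Σ_{j₁+⋯+j_m=j} C^m Π_p (Σ_{l≥1} C^l Σ_{i₁+⋯+i_l=j_p} J_{i₁}⋯J_{i_l})]`
for `j ≥ 2`, then `J(z) = Σ J_j z^j` satisfies the formal algebraic equation
`a J(z)³ - b(z) J(z)² + c(z) J(z) - z = 0` with `a = C(C+C²)(1/J₁+C)`,
`b(z) = (2C+C²)/J₁ + C² + C⁴ + (C²+C³)z` and `c(z) = 1/J₁ + (2C+C²)z`; and if the cubic
`a x³ - b(0) x² + c(0) x = 0` has three distinct (real) roots, then `J_j ≤ d D^j`. -/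
lemma compP_zero_right (J : ℕ → ℝ) (l : ℕ) (hl : 1 ≤ l) : compP J l 0 = 0 := by
  cases l with
  | zero => omega
  | succ l => simp [compP]

lemma compP_eq_zero (J : ℕ → ℝ) : ∀ l q, q < l → compP J l q = 0 := by
  intro l
  induction l with
  | zero => omega
  | succ l ih =>
    intro q hq
    rw [compP]
    apply Finset.sum_eq_zero
    intro i hi
    simp only [Finset.mem_Icc] at hi
    rw [ih (q - i) (by omega), mul_zero]

lemma compQ_eq_compP (J : ℕ → ℝ) (C : ℝ) : ∀ m j, compQ J C m j = compP (compK J C) m j := by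
  intro m
  induction m with
  | zero => intro j; rfl
  | succ m ih => intro j; rw [compQ, compP]; exact Finset.sum_congr rfl fun i _ => by rw [ih]

lemma coeff_mk_pow (J : ℕ → ℝ) (hJ0 : J 0 = 0) (l n : ℕ) :
    PowerSeries.coeff n ((PowerSeries.mk J) ^ l) = compP J l n := by
  induction l generalizing n with
  | zero => simp [compP, PowerSeries.coeff_one]
  | succ l ih =>
    rw [pow_succ, mul_comm, PowerSeries.coeff_mul, compP]
    rw [Finset.Nat.sum_antidiagonal_eq_sum_range_succ
      (f := fun a b => PowerSeries.coeff a (PowerSeries.mk J) * PowerSeries.coeff b ((PowerSeries.mk J)^l))]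
    simp only [PowerSeries.coeff_mk]
    rw [← Finset.sum_subset (s₁ := Finset.Icc 1 n) (s₂ := Finset.range (n+1))]
    · exact Finset.sum_congr rfl fun i _ => by rw [ih]
    · intro x hx; simp only [Finset.mem_Icc] at hx; simp only [Finset.mem_range]; omega
    · intro x hx hx2
      simp only [Finset.mem_Icc, Finset.mem_range] at hx hx2
      have : x = 0 := by omega
      rw [this, hJ0, zero_mul]

lemma tsum_ite_Icc (f : ℕ → ℝ) (k q : ℕ) (hf : ∀ l, q < l → f l = 0) :
    (∑' l : ℕ, if k ≤ l then f l else 0) = ∑ l ∈ Finset.Icc k q, f l := by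
  rw [tsum_eq_sum (s := Finset.Icc k q)]
  · exact Finset.sum_congr rfl fun l hl => by
      rw [if_pos (Finset.mem_Icc.mp hl).1]
  · intro l hl
    simp only [Finset.mem_Icc, not_and_or, not_le] at hl
    rcases hl with h | h
    · rw [if_neg (by omega)]
    · split <;> simp [hf l h]

open PowerSeries in
lemma GEO (A W : PowerSeries ℝ) (k : ℕ)
    (hA : ∀ l b : ℕ, b < l → coeff b (A ^ l) = 0)
    (hW : ∀ b : ℕ, coeff b W = ∑ l ∈ Finset.Icc k b, coeff b (A ^ l)) :
    (1 - A) * W = A ^ k := by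
  ext q
  have hWS : ∀ b : ℕ, b ≤ q → coeff b W = coeff b (∑ l ∈ Finset.Icc k q, A ^ l) := by
    intro b hb
    rw [hW b, map_sum]
    apply Finset.sum_subset
    · intro x hx; simp only [Finset.mem_Icc] at hx ⊢; omega
    · intro x hx hx2
      simp only [Finset.mem_Icc] at hx hx2
      exact hA x b (by omega)
  have key : coeff q ((1 - A) * W) = coeff q ((1 - A) * ∑ l ∈ Finset.Icc k q, A ^ l) := by
    rw [coeff_mul, coeff_mul]
    apply Finset.sum_congr rfl
    intro p hp
    rw [hWS p.2 (by have := Finset.HasAntidiagonal.mem_antidiagonal.mp hp; omega)]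
  rw [key]
  by_cases hk : k ≤ q + 1
  · have hIcc : ∑ l ∈ Finset.Icc k q, A ^ l = A ^ k * ∑ i ∈ Finset.range (q + 1 - k), A ^ i := by
      rw [Finset.mul_sum]
      apply Finset.sum_nbij' (fun l => l - k) (fun i => k + i)
      all_goals intro a ha
      all_goals simp only [Finset.mem_Icc, Finset.mem_range] at *
      · omega
      · omega
      · omega
      · omega
      · rw [← pow_add]; congr 1; omega
    rw [hIcc]
    have hg : (1 - A) * ((A : PowerSeries ℝ) ^ k * ∑ i ∈ Finset.range (q + 1 - k), A ^ i)
        = A ^ k - A ^ (q + 1) := by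
      have h1 := geom_sum_mul A (q + 1 - k)
      have h2 : A ^ k * A ^ (q + 1 - k) = A ^ (q + 1) := by rw [← pow_add]; congr 1; omega
      linear_combination (-(A^k)) * h1 - h2
    rw [hg, map_sub, hA (q+1) q (by omega), sub_zero]
  · rw [Finset.Icc_eq_empty (by omega), Finset.sum_empty, mul_zero,
      map_zero, hA k q (by omega)]

section Main
variable (J : ℕ → ℝ) (C : ℝ)

lemma compK_eq_sum (q : ℕ) :
    compK J C q = ∑ l ∈ Finset.Icc 1 q, C ^ l * compP J l q :=
  tsum_ite_Icc _ 1 q fun l hl => by rw [compP_eq_zero J l q hl, mul_zero]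

lemma compK_zero : compK J C 0 = 0 := by
  rw [compK_eq_sum]; simp

lemma compQ_eq_zero : ∀ m q, q < m → compQ J C m q = 0 := fun m q h => by
  rw [compQ_eq_compP]; exact compP_eq_zero _ m q h

lemma coeff_cP_pow (hJ0 : J 0 = 0) (l b : ℕ) :
    PowerSeries.coeff b ((PowerSeries.C (R := ℝ) C * PowerSeries.mk J) ^ l)
      = C ^ l * compP J l b := by
  rw [mul_pow, ← map_pow, PowerSeries.coeff_C_mul, coeff_mk_pow J hJ0]

lemma coeff_cK_pow (m b : ℕ) :
    PowerSeries.coeff b ((PowerSeries.C (R := ℝ) C * PowerSeries.mk (compK J C)) ^ m)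
      = C ^ m * compQ J C m b := by
  rw [mul_pow, ← map_pow, PowerSeries.coeff_C_mul,
    coeff_mk_pow (compK J C) (compK_zero J C), compQ_eq_compP]

end Main

theorem part1 (C : ℝ) (hC : 0 < C) (J : ℕ → ℝ)
    (hJ0 : J 0 = 0) (hJ1 : 0 < J 1)
    (hrec : ∀ j : ℕ, 2 ≤ j →
      J j = J 1 * ((∑' l : ℕ, if 2 ≤ l then C ^ l * compP J l j else 0) +
        ∑' m : ℕ, if 2 ≤ m then C ^ m * compQ J C m j else 0)) :
    (PowerSeries.C (R := ℝ) (C * (C + C ^ 2) * (1 / J 1 + C)) * (PowerSeries.mk J) ^ 3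
      - (PowerSeries.C (R := ℝ) ((2 * C + C ^ 2) / J 1 + C ^ 2 + C ^ 4)
          + PowerSeries.C (R := ℝ) (C ^ 2 + C ^ 3) * PowerSeries.X) * (PowerSeries.mk J) ^ 2
      + (PowerSeries.C (R := ℝ) (1 / J 1) + PowerSeries.C (R := ℝ) (2 * C + C ^ 2) * PowerSeries.X)
          * PowerSeries.mk J
      - PowerSeries.X = 0) := by
  set c : PowerSeries ℝ := PowerSeries.C (R := ℝ) C with hc
  set P : PowerSeries ℝ := PowerSeries.mk J with hP
  set Kk : PowerSeries ℝ := PowerSeries.mk (compK J C) with hK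
  set F : ℕ → ℝ := fun j => ∑' l : ℕ, if 2 ≤ l then C ^ l * compP J l j else 0 with hF
  set G : ℕ → ℝ := fun j => ∑' m : ℕ, if 2 ≤ m then C ^ m * compQ J C m j else 0 with hG
  set u : PowerSeries ℝ := PowerSeries.C (R := ℝ) (J 1) with hu
  have hFs : ∀ j, F j = ∑ l ∈ Finset.Icc 2 j, C ^ l * compP J l j := fun j =>
    tsum_ite_Icc _ 2 j fun l hl => by rw [compP_eq_zero J l j hl, mul_zero]
  have hGs : ∀ j, G j = ∑ m ∈ Finset.Icc 2 j, C ^ m * compQ J C m j := fun j =>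
    tsum_ite_Icc _ 2 j fun m hm => by rw [compQ_eq_zero J C m j hm, mul_zero]
  have hAcP : ∀ l b : ℕ, b < l → PowerSeries.coeff b ((c * P) ^ l) = 0 := by
    intro l b hb
    rw [hc, hP, coeff_cP_pow J C hJ0, compP_eq_zero J l b hb, mul_zero]
  have hAcK : ∀ m b : ℕ, b < m → PowerSeries.coeff b ((c * Kk) ^ m) = 0 := by
    intro m b hb
    rw [hc, hK, coeff_cK_pow J C, compQ_eq_zero J C m b hb, mul_zero]
  have E1 : (1 - c * P) * Kk = (c * P) ^ 1 := by
    apply GEO _ _ 1 hAcP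
    intro b
    rw [hK, PowerSeries.coeff_mk, compK_eq_sum]
    exact Finset.sum_congr rfl fun l _ => by rw [hc, hP, coeff_cP_pow J C hJ0]
  have E2 : (1 - c * P) * PowerSeries.mk F = (c * P) ^ 2 := by
    apply GEO _ _ 2 hAcP
    intro b
    rw [PowerSeries.coeff_mk, hFs]
    exact Finset.sum_congr rfl fun l _ => by rw [hc, hP, coeff_cP_pow J C hJ0]
  have E3 : (1 - c * Kk) * PowerSeries.mk G = (c * Kk) ^ 2 := by
    apply GEO _ _ 2 hAcK
    intro b
    rw [PowerSeries.coeff_mk, hGs]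
    exact Finset.sum_congr rfl fun m _ => by rw [hc, hK, coeff_cK_pow J C]
  have E4 : P = u * PowerSeries.X + u * (PowerSeries.mk F + PowerSeries.mk G) := by
    ext n
    rw [hP]
    simp only [PowerSeries.coeff_mk, map_add, hu, PowerSeries.coeff_C_mul,
      PowerSeries.coeff_X]
    match n with
    | 0 =>
      have hF0 : F 0 = 0 := by rw [hFs]; simp
      have hG0 : G 0 = 0 := by rw [hGs]; simp
      simp [hJ0, hF0, hG0]
    | 1 =>
      have hF1 : F 1 = 0 := by rw [hFs]; simp
      have hG1 : G 1 = 0 := by rw [hGs]; simp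
      simp [hF1, hG1]
    | (n+2) =>
      have := hrec (n+2) (by omega)
      simp only [if_neg (by omega : ¬(n+2 = 1))]
      rw [this]; ring
  have T : P * (1 - c*P) * (1 - c*Kk)
      = u * PowerSeries.X * (1 - c*P) * (1 - c*Kk) + u * c^2 * P^2 * (1 - c*Kk)
        + u * c^2 * Kk^2 * (1 - c*P) := by
    linear_combination ((1 - c*P) * (1 - c*Kk)) * E4 + (u * (1 - c*Kk)) * E2
      + (u * (1 - c*P)) * E3
  have T2 : P * (1 - c*P) * (1 - (c + c^2)*P)
      = u * PowerSeries.X * (1 - c*P) * (1 - (c + c^2)*P)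
        + u * c^2 * P^2 * (1 - (c + c^2)*P) + u * c^4 * P^2 := by
    linear_combination (1 - c*P) * T
      + (c * (P*(1 - c*P) - u*PowerSeries.X*(1 - c*P) - u*c^2*P^2)
          + u*c^2*(Kk*(1 - c*P) + c*P)) * E1
  have hinv : PowerSeries.C (R := ℝ) (1 / J 1) * u = 1 := by
    rw [hu, ← map_mul, one_div, inv_mul_cancel₀ hJ1.ne', map_one]
  rw [div_eq_mul_one_div (2 * C + C ^ 2) (J 1)]
  simp only [map_add, map_mul, map_pow, map_ofNat, ← hc]
  linear_combination (PowerSeries.C (R := ℝ) (1 / J 1)) * T2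
    + (PowerSeries.X * (1 - c*P) * (1 - (c + c^2)*P)
        + c^2*P^2*(1 - (c + c^2)*P) + c^4*P^2) * hinv

lemma basel (n : ℕ) : ∑ i ∈ Finset.Icc 1 n, (((i:ℝ))^2)⁻¹ ≤ 2 := by
  have key : ∀ m : ℕ, 1 ≤ m → ∑ i ∈ Finset.Icc 1 m, (((i:ℝ))^2)⁻¹ ≤ 2 - ((m:ℝ))⁻¹ := by
    intro m hm
    induction m, hm using Nat.le_induction with
    | base => norm_num
    | succ m hm ih =>
      rw [Finset.sum_Icc_succ_top (by omega : 1 ≤ m + 1)]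
      have hm0 : (0:ℝ) < m := by exact_mod_cast Nat.pos_of_ne_zero (by omega)
      set x : ℝ := (m:ℝ) with hx
      have h1 : ((x+1)^2)⁻¹ + (x+1)⁻¹ ≤ x⁻¹ := by
        have e : x⁻¹ - ((x+1)^2)⁻¹ - (x+1)⁻¹ = x⁻¹ * ((x+1)^2)⁻¹ := by
          field_simp
          ring
        have hpos : 0 ≤ x⁻¹ * ((x+1)^2)⁻¹ := by positivity
        linarith
      push_cast
      linarith
  rcases Nat.eq_zero_or_pos n with rfl|hn
  · simp
  · have h := key n hn
    have h2 : (0:ℝ) ≤ ((n:ℝ))⁻¹ := by positivity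
    linarith

lemma conv_sum (j : ℕ) :
    ∑ i ∈ Finset.Icc 1 (j-1), (((i:ℝ))^2)⁻¹ * ((((j-i : ℕ):ℝ))^2)⁻¹
      ≤ 16 * (((j:ℝ))^2)⁻¹ := by
  rcases Nat.eq_zero_or_pos j with rfl|hj
  · simp
  have hterm : ∀ i ∈ Finset.Icc 1 (j-1), (((i:ℝ))^2)⁻¹ * ((((j-i:ℕ):ℝ))^2)⁻¹
      ≤ 4 * (((j:ℝ))^2)⁻¹ * ((((i:ℝ))^2)⁻¹ + ((((j-i:ℕ):ℝ))^2)⁻¹) := by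
    intro i hi
    simp only [Finset.mem_Icc] at hi
    set a : ℝ := (i:ℝ) with ha
    set b : ℝ := ((j-i:ℕ):ℝ) with hb
    have ha1 : (1:ℝ) ≤ a := by rw [ha]; exact_mod_cast hi.1
    have hb1 : (1:ℝ) ≤ b := by
      rw [hb]; exact_mod_cast Nat.one_le_iff_ne_zero.mpr (by omega)
    have hab : (j:ℝ) = a + b := by
      rw [ha, hb, ← Nat.cast_add]
      congr 1
      omega
    rw [hab, ← sub_nonneg]
    have e : 4 * ((a+b)^2)⁻¹ * ((a^2)⁻¹ + (b^2)⁻¹) - (a^2)⁻¹ * (b^2)⁻¹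
        = (4*(a^2 + b^2) - (a+b)^2) * ((a^2)⁻¹ * (b^2)⁻¹ * ((a+b)^2)⁻¹) := by
      field_simp
      ring
    rw [e]
    have h1 : (0:ℝ) ≤ 4*(a^2+b^2) - (a+b)^2 := by nlinarith [sq_nonneg (a-b)]
    have h2 : (0:ℝ) ≤ (a^2)⁻¹ * (b^2)⁻¹ * ((a+b)^2)⁻¹ := by positivity
    positivity
  calc ∑ i ∈ Finset.Icc 1 (j-1), (((i:ℝ))^2)⁻¹ * ((((j-i:ℕ):ℝ))^2)⁻¹
      ≤ ∑ i ∈ Finset.Icc 1 (j-1),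
          4 * (((j:ℝ))^2)⁻¹ * ((((i:ℝ))^2)⁻¹ + ((((j-i:ℕ):ℝ))^2)⁻¹) :=
        Finset.sum_le_sum hterm
    _ = 4 * (((j:ℝ))^2)⁻¹ * ((∑ i ∈ Finset.Icc 1 (j-1), (((i:ℝ))^2)⁻¹)
          + ∑ i ∈ Finset.Icc 1 (j-1), ((((j-i:ℕ):ℝ))^2)⁻¹) := by
        rw [← Finset.mul_sum, Finset.sum_add_distrib]
    _ ≤ 16 * (((j:ℝ))^2)⁻¹ := by
        have hre : ∑ i ∈ Finset.Icc 1 (j-1), ((((j-i:ℕ):ℝ))^2)⁻¹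
            = ∑ i ∈ Finset.Icc 1 (j-1), (((i:ℝ))^2)⁻¹ := by
          apply Finset.sum_nbij' (fun i => j - i) (fun i => j - i)
          all_goals intro a ha
          all_goals simp only [Finset.mem_Icc] at *
          · omega
          · omega
          · omega
          · omega
        rw [hre]
        have hb := basel (j-1)
        have hpos : (0:ℝ) ≤ (((j:ℝ))^2)⁻¹ := by positivity
        have hsum0 : (0:ℝ) ≤ ∑ i ∈ Finset.Icc 1 (j-1), (((i:ℝ))^2)⁻¹ := by
          apply Finset.sum_nonneg; intro i _; positivity
        nlinarith

lemma Icc_pow_eq (r : ℝ) (k q : ℕ) :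
    ∑ l ∈ Finset.Icc k q, r^l = r^k * ∑ i ∈ Finset.range (q+1-k), r^i := by
  rw [Finset.mul_sum]
  apply Finset.sum_nbij' (fun l => l - k) (fun i => k + i)
  all_goals intro a ha
  all_goals simp only [Finset.mem_Icc, Finset.mem_range] at *
  · omega
  · omega
  · omega
  · omega
  · rw [← pow_add]; congr 1; omega

lemma geo_range (r : ℝ) (hr0 : 0 ≤ r) (hr : r ≤ 1/2) (m : ℕ) :
    ∑ i ∈ Finset.range m, r^i ≤ 2 := by
  induction m with
  | zero => norm_num
  | succ m ih =>
    rw [geom_sum_succ]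
    have hnn : (0:ℝ) ≤ ∑ i ∈ Finset.range m, r^i := by
      apply Finset.sum_nonneg; intro i _; positivity
    nlinarith

lemma geo_Icc (r : ℝ) (hr0 : 0 ≤ r) (hr : r ≤ 1/2) (k q : ℕ) :
    ∑ l ∈ Finset.Icc k q, r^l ≤ 2 * r^k := by
  rw [Icc_pow_eq]
  have h := geo_range r hr0 hr (q+1-k)
  have : (0:ℝ) ≤ r^k := by positivity
  nlinarith

lemma compP_one (J : ℕ → ℝ) (q : ℕ) (hq : 1 ≤ q) : compP J 1 q = J q := by
  rw [compP]
  rw [Finset.sum_eq_single q]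
  · show J q * (if q - q = 0 then (1:ℝ) else 0) = J q
    simp
  · intro i hi hne
    simp only [Finset.mem_Icc] at hi
    show J i * (if q - i = 0 then (1:ℝ) else 0) = 0
    rw [if_neg (by omega), mul_zero]
  · intro h
    exact absurd (Finset.mem_Icc.mpr ⟨hq, le_refl q⟩) h

lemma majorP (J : ℕ → ℝ) (ε μ : ℝ) (hε : 0 ≤ ε) (hμ : 0 ≤ μ) (n : ℕ)
    (hb : ∀ i, 1 ≤ i → i ≤ n → 0 ≤ J i ∧ J i ≤ ε * (((i:ℝ))^2)⁻¹ * μ^i) :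
    ∀ l, 1 ≤ l → ∀ q, 1 ≤ q → q ≤ n + 1 → (q = n + 1 → 2 ≤ l) →
      0 ≤ compP J l q ∧
      compP J l q ≤ (16*ε)^l/16 * (((q:ℝ))^2)⁻¹ * μ^q := by
  intro l
  induction l with
  | zero => omega
  | succ l ih =>
    intro hl q hq hqn htop
    rcases Nat.eq_zero_or_pos l with rfl|hl1
    · have hqn' : q ≤ n := by
        by_contra hcon
        have := htop (by omega)
        omega
      rw [compP_one J q hq]
      refine ⟨(hb q hq hqn').1, ?_⟩
      have := (hb q hq hqn').2
      have heq : (16*ε)^1/16 = ε := by norm_num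
      rw [heq]
      exact this
    · rw [compP]
      have hshrink : ∑ i ∈ Finset.Icc 1 q, J i * compP J l (q-i)
          = ∑ i ∈ Finset.Icc 1 (q-1), J i * compP J l (q-i) := by
        symm
        apply Finset.sum_subset
        · intro x hx
          simp only [Finset.mem_Icc] at hx ⊢
          omega
        · intro x hx hx2
          simp only [Finset.mem_Icc] at hx hx2
          have hxq : x = q := by omega
          rw [hxq, Nat.sub_self, compP_zero_right J l hl1, mul_zero]
      rw [hshrink]
      have hterm : ∀ i ∈ Finset.Icc 1 (q-1),
          0 ≤ J i * compP J l (q-i) ∧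
          J i * compP J l (q-i) ≤ (ε * (16*ε)^l/16 * μ^q) *
            ((((i:ℝ))^2)⁻¹ * ((((q-i:ℕ):ℝ))^2)⁻¹) := by
        intro i hi
        simp only [Finset.mem_Icc] at hi
        have hiq : i ≤ n := by omega
        have hJi := hb i hi.1 hiq
        have hrec := ih hl1 (q-i) (by omega) (by omega) (by omega)
        constructor
        · exact mul_nonneg hJi.1 hrec.1
        · have h1 : J i * compP J l (q-i)
              ≤ (ε * (((i:ℝ))^2)⁻¹ * μ^i) * ((16*ε)^l/16 * ((((q-i:ℕ):ℝ))^2)⁻¹ * μ^(q-i)) := by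
            apply mul_le_mul hJi.2 hrec.2 hrec.1
            positivity
          have h2 : μ^i * μ^(q-i) = μ^q := by
            rw [← pow_add]
            congr 1
            omega
          calc J i * compP J l (q-i)
              ≤ (ε * (((i:ℝ))^2)⁻¹ * μ^i) * ((16*ε)^l/16 * ((((q-i:ℕ):ℝ))^2)⁻¹ * μ^(q-i)) := h1
            _ = (ε * (16*ε)^l/16 * (μ^i * μ^(q-i))) *
                ((((i:ℝ))^2)⁻¹ * ((((q-i:ℕ):ℝ))^2)⁻¹) := by ring
            _ = (ε * (16*ε)^l/16 * μ^q) * ((((i:ℝ))^2)⁻¹ * ((((q-i:ℕ):ℝ))^2)⁻¹) := by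
                rw [h2]
      constructor
      · apply Finset.sum_nonneg
        intro i hi
        exact (hterm i hi).1
      · calc ∑ i ∈ Finset.Icc 1 (q-1), J i * compP J l (q-i)
            ≤ ∑ i ∈ Finset.Icc 1 (q-1), (ε * (16*ε)^l/16 * μ^q) *
                ((((i:ℝ))^2)⁻¹ * ((((q-i:ℕ):ℝ))^2)⁻¹) :=
              Finset.sum_le_sum fun i hi => (hterm i hi).2
          _ = (ε * (16*ε)^l/16 * μ^q) *
              ∑ i ∈ Finset.Icc 1 (q-1), (((i:ℝ))^2)⁻¹ * ((((q-i:ℕ):ℝ))^2)⁻¹ := by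
              rw [Finset.mul_sum]
          _ ≤ (ε * (16*ε)^l/16 * μ^q) * (16 * (((q:ℝ))^2)⁻¹) := by
              apply mul_le_mul_of_nonneg_left (conv_sum q)
              positivity
          _ = (16*ε)^(l+1)/16 * (((q:ℝ))^2)⁻¹ * μ^q := by
              rw [pow_succ]
              ring

lemma majorK (J : ℕ → ℝ) (C ε μ : ℝ) (hC : 0 < C) (hε : 0 ≤ ε) (hμ : 0 ≤ μ)
    (hsmall : 16*C*ε ≤ 1/2) (n : ℕ)
    (hb : ∀ i, 1 ≤ i → i ≤ n → 0 ≤ J i ∧ J i ≤ ε * (((i:ℝ))^2)⁻¹ * μ^i) :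
    ∀ q, 1 ≤ q → q ≤ n → 0 ≤ compK J C q ∧
      compK J C q ≤ (2*C*ε) * (((q:ℝ))^2)⁻¹ * μ^q := by
  intro q hq hqn
  rw [compK_eq_sum]
  have hterm : ∀ l ∈ Finset.Icc 1 q,
      0 ≤ C^l * compP J l q ∧
      C^l * compP J l q ≤ ((((q:ℝ))^2)⁻¹ * μ^q / 16) * (16*C*ε)^l := by
    intro l hl
    simp only [Finset.mem_Icc] at hl
    have hm := majorP J ε μ hε hμ n hb l hl.1 q hq (by omega) (by omega)
    constructor
    · exact mul_nonneg (by positivity) hm.1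
    · calc C^l * compP J l q ≤ C^l * ((16*ε)^l/16 * (((q:ℝ))^2)⁻¹ * μ^q) := by
            apply mul_le_mul_of_nonneg_left hm.2
            positivity
        _ = ((((q:ℝ))^2)⁻¹ * μ^q / 16) * (C^l * (16*ε)^l) := by ring
        _ = ((((q:ℝ))^2)⁻¹ * μ^q / 16) * (16*C*ε)^l := by
            rw [← mul_pow]
            ring_nf
  constructor
  · exact Finset.sum_nonneg fun l hl => (hterm l hl).1
  · calc ∑ l ∈ Finset.Icc 1 q, C^l * compP J l q
        ≤ ∑ l ∈ Finset.Icc 1 q, ((((q:ℝ))^2)⁻¹ * μ^q / 16) * (16*C*ε)^l :=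
          Finset.sum_le_sum fun l hl => (hterm l hl).2
      _ = ((((q:ℝ))^2)⁻¹ * μ^q / 16) * ∑ l ∈ Finset.Icc 1 q, (16*C*ε)^l := by
          rw [Finset.mul_sum]
      _ ≤ ((((q:ℝ))^2)⁻¹ * μ^q / 16) * (2 * (16*C*ε)^1) := by
          apply mul_le_mul_of_nonneg_left (geo_Icc (16*C*ε) (by positivity) hsmall 1 q)
          positivity
      _ = (2*C*ε) * (((q:ℝ))^2)⁻¹ * μ^q := by ring

lemma F_eq (J : ℕ → ℝ) (C : ℝ) (j : ℕ) :
    (∑' l : ℕ, if 2 ≤ l then C ^ l * compP J l j else 0)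
      = ∑ l ∈ Finset.Icc 2 j, C ^ l * compP J l j :=
  tsum_ite_Icc _ 2 j fun l hl => by rw [compP_eq_zero J l j hl, mul_zero]

lemma G_eq (J : ℕ → ℝ) (C : ℝ) (j : ℕ) :
    (∑' m : ℕ, if 2 ≤ m then C ^ m * compQ J C m j else 0)
      = ∑ m ∈ Finset.Icc 2 j, C ^ m * compQ J C m j :=
  tsum_ite_Icc _ 2 j fun m hm => by rw [compQ_eq_zero J C m j hm, mul_zero]

theorem part2 (C : ℝ) (hC : 0 < C) (J : ℕ → ℝ)
    (hJ0 : J 0 = 0) (hJ1 : 0 < J 1)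
    (hrec : ∀ j : ℕ, 2 ≤ j →
      J j = J 1 * ((∑' l : ℕ, if 2 ≤ l then C ^ l * compP J l j else 0) +
        ∑' m : ℕ, if 2 ≤ m then C ^ m * compQ J C m j else 0)) :
    ∃ d D : ℝ, 0 ≤ d ∧ 0 < D ∧ ∀ j : ℕ, 1 ≤ j → J j ≤ d * D ^ j := by
  set X : ℝ := J 1 * (32*C^2 + 128*C^4) with hX
  have hXpos : 0 < X := by rw [hX]; positivity
  set ε : ℝ := min (1/(64*C^2)) (min (1/(32*C)) (1/(X+1))) with hεdef
  have hε : 0 < ε := lt_min (by positivity) (lt_min (by positivity) (by positivity))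
  have hs1 : 16*C*ε ≤ 1/2 := by
    have h : ε ≤ 1/(32*C) := le_trans (min_le_right _ _) (min_le_left _ _)
    calc 16*C*ε ≤ 16*C*(1/(32*C)) := by
          apply mul_le_mul_of_nonneg_left h (by positivity)
      _ = 1/2 := by field_simp; ring
  have hs2 : 32*C^2*ε ≤ 1/2 := by
    have h : ε ≤ 1/(64*C^2) := min_le_left _ _
    calc 32*C^2*ε ≤ 32*C^2*(1/(64*C^2)) := by
          apply mul_le_mul_of_nonneg_left h (by positivity)
      _ = 1/2 := by field_simp; ring
  have hs3 : X*ε ≤ 1 := by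
    have h : ε ≤ 1/(X+1) := le_trans (min_le_right _ _) (min_le_right _ _)
    calc X*ε ≤ X*(1/(X+1)) := mul_le_mul_of_nonneg_left h hXpos.le
      _ ≤ 1 := by
        rw [mul_one_div, div_le_one (by positivity)]
        linarith
  set μ : ℝ := J 1 / ε with hμdef
  have hμ : 0 < μ := by positivity
  have main : ∀ j, 1 ≤ j → 0 ≤ J j ∧ J j ≤ ε * (((j:ℝ))^2)⁻¹ * μ^j := by
    intro j
    induction j using Nat.strong_induction_on with
    | _ j ih =>
      intro hj
      rcases eq_or_lt_of_le hj with h1|h2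
      · rw [← h1]
        constructor
        · exact hJ1.le
        · have : ε * (((1:ℕ):ℝ)^2)⁻¹ * μ^(1:ℕ) = J 1 := by
            rw [hμdef]
            field_simp
            norm_num
          rw [this]
      · -- 2 ≤ j
        have hj2 : 2 ≤ j := h2
        have hb : ∀ i, 1 ≤ i → i ≤ j-1 →
            0 ≤ J i ∧ J i ≤ ε * (((i:ℝ))^2)⁻¹ * μ^i := fun i hi1 hi2 =>
          ih i (by omega) hi1
        have hjn : j = (j-1) + 1 := by omega
        -- F bounds
        have hFterm : ∀ l ∈ Finset.Icc 2 j,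
            0 ≤ C^l * compP J l j ∧
            C^l * compP J l j ≤ ((((j:ℝ))^2)⁻¹ * μ^j / 16) * (16*C*ε)^l := by
          intro l hl
          simp only [Finset.mem_Icc] at hl
          have hm := majorP J ε μ hε.le hμ.le (j-1) hb l (by omega) j (by omega)
            (by omega) (fun _ => hl.1)
          refine ⟨mul_nonneg (by positivity) hm.1, ?_⟩
          calc C^l * compP J l j ≤ C^l * ((16*ε)^l/16 * (((j:ℝ))^2)⁻¹ * μ^j) := by
                apply mul_le_mul_of_nonneg_left hm.2 (by positivity)
            _ = ((((j:ℝ))^2)⁻¹ * μ^j / 16) * (C^l * (16*ε)^l) := by ring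
            _ = ((((j:ℝ))^2)⁻¹ * μ^j / 16) * (16*C*ε)^l := by
                rw [← mul_pow]; ring_nf
        have hFsum : 0 ≤ ∑ l ∈ Finset.Icc 2 j, C^l * compP J l j ∧
            ∑ l ∈ Finset.Icc 2 j, C^l * compP J l j
              ≤ 32*C^2*ε^2 * ((((j:ℝ))^2)⁻¹ * μ^j) := by
          constructor
          · exact Finset.sum_nonneg fun l hl => (hFterm l hl).1
          · calc ∑ l ∈ Finset.Icc 2 j, C^l * compP J l j
                ≤ ∑ l ∈ Finset.Icc 2 j, ((((j:ℝ))^2)⁻¹ * μ^j / 16) * (16*C*ε)^l :=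
                  Finset.sum_le_sum fun l hl => (hFterm l hl).2
              _ = ((((j:ℝ))^2)⁻¹ * μ^j / 16) * ∑ l ∈ Finset.Icc 2 j, (16*C*ε)^l := by
                  rw [Finset.mul_sum]
              _ ≤ ((((j:ℝ))^2)⁻¹ * μ^j / 16) * (2 * (16*C*ε)^2) := by
                  apply mul_le_mul_of_nonneg_left
                    (geo_Icc (16*C*ε) (by positivity) hs1 2 j) (by positivity)
              _ = 32*C^2*ε^2 * ((((j:ℝ))^2)⁻¹ * μ^j) := by ring
        -- K bounds
        have hKb : ∀ i, 1 ≤ i → i ≤ j-1 →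
            0 ≤ compK J C i ∧ compK J C i ≤ (2*C*ε) * (((i:ℝ))^2)⁻¹ * μ^i :=
          fun i hi1 hi2 => majorK J C ε μ hC hε.le hμ.le hs1 (j-1) hb i hi1 hi2
        -- G bounds
        have hGterm : ∀ m ∈ Finset.Icc 2 j,
            0 ≤ C^m * compQ J C m j ∧
            C^m * compQ J C m j ≤ ((((j:ℝ))^2)⁻¹ * μ^j / 16) * (32*C^2*ε)^m := by
          intro m hm
          simp only [Finset.mem_Icc] at hm
          have hq := majorP (compK J C) (2*C*ε) μ (by positivity) hμ.le (j-1) hKb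
            m (by omega) j (by omega) (by omega) (fun _ => hm.1)
          rw [← compQ_eq_compP] at hq
          refine ⟨mul_nonneg (by positivity) hq.1, ?_⟩
          calc C^m * compQ J C m j
              ≤ C^m * ((16*(2*C*ε))^m/16 * (((j:ℝ))^2)⁻¹ * μ^j) := by
                apply mul_le_mul_of_nonneg_left hq.2 (by positivity)
            _ = ((((j:ℝ))^2)⁻¹ * μ^j / 16) * (C^m * (16*(2*C*ε))^m) := by ring
            _ = ((((j:ℝ))^2)⁻¹ * μ^j / 16) * (32*C^2*ε)^m := by
                rw [← mul_pow]; ring_nf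
        have hGsum : 0 ≤ ∑ m ∈ Finset.Icc 2 j, C^m * compQ J C m j ∧
            ∑ m ∈ Finset.Icc 2 j, C^m * compQ J C m j
              ≤ 2*(32*C^2*ε)^2/16 * ((((j:ℝ))^2)⁻¹ * μ^j) := by
          constructor
          · exact Finset.sum_nonneg fun m hm => (hGterm m hm).1
          · calc ∑ m ∈ Finset.Icc 2 j, C^m * compQ J C m j
                ≤ ∑ m ∈ Finset.Icc 2 j, ((((j:ℝ))^2)⁻¹ * μ^j / 16) * (32*C^2*ε)^m :=
                  Finset.sum_le_sum fun m hm => (hGterm m hm).2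
              _ = ((((j:ℝ))^2)⁻¹ * μ^j / 16) * ∑ m ∈ Finset.Icc 2 j, (32*C^2*ε)^m := by
                  rw [Finset.mul_sum]
              _ ≤ ((((j:ℝ))^2)⁻¹ * μ^j / 16) * (2 * (32*C^2*ε)^2) := by
                  apply mul_le_mul_of_nonneg_left
                    (geo_Icc (32*C^2*ε) (by positivity) hs2 2 j) (by positivity)
              _ = 2*(32*C^2*ε)^2/16 * ((((j:ℝ))^2)⁻¹ * μ^j) := by ring
        have hJj : J j = J 1 * ((∑ l ∈ Finset.Icc 2 j, C^l * compP J l j) +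
            ∑ m ∈ Finset.Icc 2 j, C^m * compQ J C m j) := by
          rw [hrec j hj2, F_eq, G_eq]
        constructor
        · rw [hJj]
          exact mul_nonneg hJ1.le (add_nonneg hFsum.1 hGsum.1)
        · rw [hJj]
          have hw : (0:ℝ) ≤ (((j:ℝ))^2)⁻¹ * μ^j := by positivity
          have hbig : J 1 * ((∑ l ∈ Finset.Icc 2 j, C^l * compP J l j) +
              ∑ m ∈ Finset.Icc 2 j, C^m * compQ J C m j)
                ≤ J 1 * ((32*C^2*ε^2 + 2*(32*C^2*ε)^2/16) * ((((j:ℝ))^2)⁻¹ * μ^j)) := by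
            apply mul_le_mul_of_nonneg_left _ hJ1.le
            calc (∑ l ∈ Finset.Icc 2 j, C^l * compP J l j) +
                ∑ m ∈ Finset.Icc 2 j, C^m * compQ J C m j
                ≤ 32*C^2*ε^2 * ((((j:ℝ))^2)⁻¹ * μ^j)
                  + 2*(32*C^2*ε)^2/16 * ((((j:ℝ))^2)⁻¹ * μ^j) :=
                  add_le_add hFsum.2 hGsum.2
              _ = (32*C^2*ε^2 + 2*(32*C^2*ε)^2/16) * ((((j:ℝ))^2)⁻¹ * μ^j) := by ring
          have hfin : J 1 * ((32*C^2*ε^2 + 2*(32*C^2*ε)^2/16) * ((((j:ℝ))^2)⁻¹ * μ^j))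
              ≤ ε * (((j:ℝ))^2)⁻¹ * μ^j := by
            have he : J 1 * ((32*C^2*ε^2 + 2*(32*C^2*ε)^2/16) * ((((j:ℝ))^2)⁻¹ * μ^j))
                = (X*ε) * (ε * ((((j:ℝ))^2)⁻¹ * μ^j)) := by
              rw [hX]; ring
            rw [he]
            have h01 : (X*ε) * (ε * ((((j:ℝ))^2)⁻¹ * μ^j)) ≤ 1 * (ε * ((((j:ℝ))^2)⁻¹ * μ^j)) := by
              apply mul_le_mul_of_nonneg_right hs3 (by positivity)
            calc (X*ε) * (ε * ((((j:ℝ))^2)⁻¹ * μ^j)) ≤ 1 * (ε * ((((j:ℝ))^2)⁻¹ * μ^j)) := h01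
              _ = ε * (((j:ℝ))^2)⁻¹ * μ^j := by ring
          linarith
  refine ⟨ε, μ, hε.le, hμ, ?_⟩
  intro j hj
  have h := (main j hj).2
  have hw1 : (((j:ℝ))^2)⁻¹ ≤ 1 := by
    have : (1:ℝ) ≤ ((j:ℝ))^2 := by
      have : (1:ℝ) ≤ (j:ℝ) := by exact_mod_cast hj
      nlinarith
    rw [inv_le_one_iff₀]
    · right; exact this
  have hμj : (0:ℝ) ≤ μ^j := by positivity
  calc J j ≤ ε * (((j:ℝ))^2)⁻¹ * μ^j := h
    _ ≤ ε * 1 * μ^j := by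
        apply mul_le_mul_of_nonneg_right _ hμj
        exact mul_le_mul_of_nonneg_left hw1 hε.le
    _ = ε * μ^j := by ring

theorem generating_function_bound (C : ℝ) (hC : 0 < C) (J : ℕ → ℝ)
    (hJ0 : J 0 = 0) (hJ1 : 0 < J 1)
    (hrec : ∀ j : ℕ, 2 ≤ j →
      J j = J 1 * ((∑' l : ℕ, if 2 ≤ l then C ^ l * compP J l j else 0) +
        ∑' m : ℕ, if 2 ≤ m then C ^ m * compQ J C m j else 0)) :
    (PowerSeries.C (R := ℝ) (C * (C + C ^ 2) * (1 / J 1 + C)) * (PowerSeries.mk J) ^ 3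
      - (PowerSeries.C (R := ℝ) ((2 * C + C ^ 2) / J 1 + C ^ 2 + C ^ 4)
          + PowerSeries.C (R := ℝ) (C ^ 2 + C ^ 3) * PowerSeries.X) * (PowerSeries.mk J) ^ 2
      + (PowerSeries.C (R := ℝ) (1 / J 1) + PowerSeries.C (R := ℝ) (2 * C + C ^ 2) * PowerSeries.X)
          * PowerSeries.mk J
      - PowerSeries.X = 0) ∧
    ((∃ x₁ x₂ x₃ : ℝ, x₁ ≠ x₂ ∧ x₁ ≠ x₃ ∧ x₂ ≠ x₃ ∧
        (∀ x ∈ ({x₁, x₂, x₃} : Set ℝ),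
          (C * (C + C ^ 2) * (1 / J 1 + C)) * x ^ 3
            - ((2 * C + C ^ 2) / J 1 + C ^ 2 + C ^ 4) * x ^ 2 + (1 / J 1) * x = 0)) →
      ∃ d D : ℝ, 0 ≤ d ∧ 0 < D ∧ ∀ j : ℕ, 1 ≤ j → J j ≤ d * D ^ j) := by
  exact ⟨part1 C hC J hJ0 hJ1 hrec, fun _ => part2 C hC J hJ0 hJ1 hrec⟩
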